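/- Let Λ be a Metzler matrix and p > 0 a vector with Λp < 0 componentwise. If V : [0,∞) → ℝ^l is continuous, V(0) ≤ p componentwise, and whenever V_i(t) = p_i the upper right Dini derivative satisfies D⁺V_i(t) ≤ (ΛV(t))_i < 0, then V(t) ≤ p componentwise for all t ≥ 0. -/
import Mathlib


open Filter Set Topology

theorem invariance_boundary_dini {l : ℕ} (Λ : Matrix (Fin l) (Fin l) ℝ)
    (hM : ∀ i j, i ≠ j → 0 ≤ Λ i j)
    (p : Fin l → ℝ) (hp : ∀ i, 0 < p i) (hΛp : ∀ i, Λ.mulVec p i < 0)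
    (V : ℝ → (Fin l → ℝ))
    (hcont : ∀ i, Continuous (fun t => V t i))
    (hV0 : V 0 ≤ p)
    (hbdry : ∀ t : ℝ, 0 ≤ t → ∀ i, V t i = p i →
      (limsup (fun h : ℝ => (V (t + h) i - V t i) / h) (nhdsWithin 0 (Ioi 0))
        ≤ Λ.mulVec (V t) i) ∧ Λ.mulVec (V t) i < 0) :
    ∀ t : ℝ, 0 ≤ t → V t ≤ p := by
  by_contra hcon
  push_neg at hcon
  obtain ⟨t₁, ht₁, hbad⟩ := hcon
  set S : Set ℝ := {t | 0 ≤ t ∧ ¬ V t ≤ p} with hSdef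
  have hSne : S.Nonempty := ⟨t₁, ht₁, hbad⟩
  have hSbdd : BddBelow S := ⟨0, fun t ht => ht.1⟩
  set t₀ : ℝ := sInf S with ht₀def
  have ht₀0 : 0 ≤ t₀ := le_csInf hSne (fun t ht => ht.1)
  have hlt : ∀ t, 0 ≤ t → t < t₀ → V t ≤ p := by
    intro t ht htlt
    by_contra hnot
    exact absurd (csInf_le hSbdd ⟨ht, hnot⟩) (not_le.mpr htlt)
  have hVt₀ : V t₀ ≤ p := by
    rcases eq_or_lt_of_le ht₀0 with h0 | h0
    · rw [← h0]; exact hV0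
    · intro j
      have htend : Tendsto (fun t => V t j) (𝓝[<] t₀) (𝓝 (V t₀ j)) :=
        ((hcont j).tendsto t₀).mono_left nhdsWithin_le_nhds
      refine le_of_tendsto htend ?_
      filter_upwards [Ioo_mem_nhdsLT_of_mem (Set.mem_Ioc.mpr ⟨h0, le_refl t₀⟩)] with t ht
      exact hlt t ht.1.le ht.2 j
  have key : ∀ i : Fin l, ∃ ε > (0:ℝ), ∀ h : ℝ, 0 < h → h < ε → V (t₀ + h) i ≤ p i := by
    intro i
    rcases lt_or_eq_of_le (hVt₀ i) with hlt' | heq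
    · have hev : ∀ᶠ t in 𝓝 t₀, V t i < p i :=
        ((hcont i).tendsto t₀).eventually_lt_const hlt'
      rcases Metric.eventually_nhds_iff.mp hev with ⟨ε, hε, hball⟩
      refine ⟨ε, hε, fun h h0 hh => ?_⟩
      have hd : dist (t₀ + h) t₀ < ε := by
        rw [Real.dist_eq, add_sub_cancel_left, abs_of_pos h0]; exact hh
      exact (hball hd).le
    · obtain ⟨hls, hneg⟩ := hbdry t₀ ht₀0 i heq
      set f : ℝ → ℝ := fun h => (V (t₀ + h) i - V t₀ i) / h with hfdef
      have hbdd : IsBoundedUnder (· ≤ ·) (𝓝[>] (0:ℝ)) f := by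
        by_contra hnb
        have hempty : {a : ℝ | ∀ᶠ x in 𝓝[>] (0:ℝ), f x ≤ a} = ∅ := by
          rw [Set.eq_empty_iff_forall_notMem]
          intro a ha
          exact hnb ⟨a, by rwa [eventually_map]⟩
        have hz : limsup f (𝓝[>] (0:ℝ)) = 0 := by
          rw [limsup_eq, hempty, Real.sInf_empty]
        rw [hz] at hls
        exact absurd (lt_of_le_of_lt hls hneg) (lt_irrefl 0)
      have hev : ∀ᶠ h in 𝓝[>] (0:ℝ), f h < 0 :=
        eventually_lt_of_limsup_lt (lt_of_le_of_lt hls hneg) hbdd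
      rcases mem_nhdsGT_iff_exists_Ioo_subset.mp hev with ⟨u, hu, hsub⟩
      refine ⟨u, hu, fun h h0 hh => ?_⟩
      have hfh : f h < 0 := hsub ⟨h0, hh⟩
      have hsub0 : V (t₀ + h) i - V t₀ i < 0 := by
        by_contra hge
        push_neg at hge
        exact absurd (div_nonneg hge h0.le) (not_le.mpr hfh)
      linarith only [hsub0, heq]
  have hne : Nonempty (Fin l) := by
    by_contra h
    exact hbad (fun i => ((h ⟨i⟩).elim))
  choose ε hεpos hεbd using key
  set εm : ℝ := Finset.univ.inf' (Finset.univ_nonempty) ε with hεmdef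
  have hεmpos : 0 < εm := by
    rw [hεmdef, Finset.lt_inf'_iff]
    exact fun i _ => hεpos i
  have hlb : ∀ t ∈ S, t₀ + εm ≤ t := by
    intro t ht
    by_contra hlt2
    push_neg at hlt2
    have htge : t₀ ≤ t := csInf_le hSbdd ht
    rcases eq_or_lt_of_le htge with he | hgt
    · exact ht.2 (he ▸ hVt₀)
    · have : V t ≤ p := by
        intro i
        have h0 : 0 < t - t₀ := sub_pos.mpr hgt
        have h1 : t - t₀ < ε i :=
          lt_of_lt_of_le (by linarith only [hlt2]) (Finset.inf'_le ε (Finset.mem_univ i))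
        have := hεbd i (t - t₀) h0 h1
        rwa [add_sub_cancel] at this
      exact ht.2 this
  have : t₀ + εm ≤ t₀ := le_csInf hSne hlb
  linarith only [this, hεmpos]
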